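/- Let v ∈ BL([0,1]) with stopped flow Φ_t and push-forward semigroup P_t, and let ν₀ ∈ M([0,1]). Then for every ψ ∈ C¹([0,1]×[0,T]) with ∂_x ψ(0,t) = ∂_x ψ(1,t) = 0 for all t ∈ [0,T], one has ∫_0^T ⟨P_t ν₀, ∂_x ψ(·,t)·v + ∂_t ψ(·,t)⟩ dt = ⟨P_T ν₀, ψ(·,T)⟩ − ⟨ν₀, ψ(·,0)⟩. -/

import Mathlib

open MeasureTheory Set Filter
open scoped ENNReal NNReal Topology

noncomputable section

abbrev I01 : Type := Set.Icc (0:ℝ) 1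

noncomputable def tvNorm (μ : SignedMeasure I01) : ℝ :=
  (μ.totalVariation Set.univ).toReal

noncomputable def supNorm (φ : I01 → ℝ) : ℝ := ⨆ x : I01, |φ x|

noncomputable def lipConst (φ : I01 → ℝ) : ℝ :=
  sInf {K : ℝ | 0 ≤ K ∧ ∀ x y : I01, |φ x - φ y| ≤ K * dist x y}

noncomputable def blNorm (φ : I01 → ℝ) : ℝ := supNorm φ + lipConst φ

noncomputable def pairSM (μ : SignedMeasure I01) (φ : I01 → ℝ) : ℝ :=
  ∫ x, φ x ∂μ.toJordanDecomposition.posPart - ∫ x, φ x ∂μ.toJordanDecomposition.negPart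

noncomputable def dualBLNorm (μ : SignedMeasure I01) : ℝ :=
  sSup {r : ℝ | ∃ φ : I01 → ℝ, Continuous φ ∧ blNorm φ ≤ 1 ∧ r = |pairSM μ φ|}

noncomputable def Ff (f : I01 → ℝ) (μ : SignedMeasure I01) : SignedMeasure I01 :=
  μ.toJordanDecomposition.posPart.withDensityᵥ f -
    μ.toJordanDecomposition.negPart.withDensityᵥ f

/-- The stopped flow on `[0,1]` generated by a velocity field `v`: trajectories solve
`ẋ = v(x)` up to the boundary-hitting time `τ` and are frozen afterwards at the boundary
point reached; `τ` is maximal (the trajectory is stopped only where `v` pushes it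
strictly out of `[0,1]`). -/
structure StoppedFlow where
  v : I01 → ℝ
  Φ : ℝ → I01 → I01
  τ : I01 → ℝ≥0∞
  init : ∀ y, Φ 0 y = y
  ode : ∀ y, ∀ t : ℝ, 0 ≤ t → ENNReal.ofReal t < τ y →
      HasDerivAt (fun s => (Φ s y : ℝ)) (v (Φ t y)) t
  stopped : ∀ y, ∀ t : ℝ, τ y ≤ ENNReal.ofReal t →
      (Φ t y : ℝ) = 0 ∨ (Φ t y : ℝ) = 1
  frozen : ∀ y, ∀ s t : ℝ, τ y ≤ ENNReal.ofReal s → s ≤ t → Φ t y = Φ s y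
  maximal : ∀ y, τ y ≠ ⊤ →
      (((Φ (τ y).toReal y : ℝ) = 0 ∧ v (Φ (τ y).toReal y) < 0) ∨
       ((Φ (τ y).toReal y : ℝ) = 1 ∧ 0 < v (Φ (τ y).toReal y)))
  cont_t : ∀ y, Continuous fun t => Φ t y
  cont_y : ∀ t : ℝ, 0 ≤ t → Continuous fun y => Φ t y

/-! ### Auxiliary lemmas -/

lemma cont_integrable (μ : Measure I01) [IsFiniteMeasure μ] (φ : I01 → ℝ) (h : Continuous φ) :
    Integrable φ μ :=
  integrableOn_univ.mp (h.continuousOn.integrableOn_compact isCompact_univ)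

lemma sm_decomp (ν : SignedMeasure I01) : ν = ν.toJordanDecomposition.posPart.toSignedMeasure
    - ν.toJordanDecomposition.negPart.toSignedMeasure := by
  conv_lhs => rw [← ν.toSignedMeasure_toJordanDecomposition]
  rfl

lemma pairSM_eq (α β : Measure I01) [IsFiniteMeasure α] [IsFiniteMeasure β]
    (μ : SignedMeasure I01) (h : μ = α.toSignedMeasure - β.toSignedMeasure)
    (φ : I01 → ℝ) (hφ : Continuous φ) :
    pairSM μ φ = ∫ x, φ x ∂α - ∫ x, φ x ∂β := by
  have key : μ.toJordanDecomposition.posPart + β = α + μ.toJordanDecomposition.negPart := by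
    rw [← Measure.toSignedMeasure_eq_toSignedMeasure_iff,
      Measure.toSignedMeasure_add, Measure.toSignedMeasure_add]
    have h2 := (sm_decomp μ).symm.trans h
    linear_combination (norm := abel_nf) h2
  have hint : ∀ (m : Measure I01) [IsFiniteMeasure m], Integrable φ m := fun m _ =>
    cont_integrable m φ hφ
  have := integral_add_measure (μ := μ.toJordanDecomposition.posPart) (ν := β)
    (hint _) (hint _) (f := φ)
  rw [key] at this
  rw [integral_add_measure (hint _) (hint _)] at this
  unfold pairSM
  linarith

lemma map_decomp (ν : SignedMeasure I01) (f : I01 → I01) (hf : Measurable f) :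
    ν.map f = (ν.toJordanDecomposition.posPart.map f).toSignedMeasure
      - (ν.toJordanDecomposition.negPart.map f).toSignedMeasure := by
  ext s hs
  rw [VectorMeasure.map_apply _ hf hs, Measure.toSignedMeasure_sub_apply hs,
    map_measureReal_apply hf hs, map_measureReal_apply hf hs]
  conv_lhs => rw [sm_decomp ν]
  rw [Measure.toSignedMeasure_sub_apply (hf hs)]

section Main

variable (F : StoppedFlow) {K : ℝ≥0} (hv : LipschitzWith K F.v)
    (T : ℝ) (hT : 0 < T) (ψ ψx ψt : ℝ → ℝ → ℝ)
    (hψ : ∀ x ∈ Set.Icc (0:ℝ) 1, ∀ t ∈ Set.Icc (0:ℝ) T,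
      HasFDerivWithinAt (fun p : ℝ × ℝ => ψ p.1 p.2)
        ((ψx x t) • (ContinuousLinearMap.fst ℝ ℝ ℝ) +
          (ψt x t) • (ContinuousLinearMap.snd ℝ ℝ ℝ))
        (Set.Icc (0:ℝ) 1 ×ˢ Set.Icc (0:ℝ) T) (x, t))
    (hψx : ContinuousOn (fun p : ℝ × ℝ => ψx p.1 p.2) (Set.Icc (0:ℝ) 1 ×ˢ Set.Icc (0:ℝ) T))
    (hψt : ContinuousOn (fun p : ℝ × ℝ => ψt p.1 p.2) (Set.Icc (0:ℝ) 1 ×ˢ Set.Icc (0:ℝ) T))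
    (hbc : ∀ t ∈ Set.Icc (0:ℝ) T, ψx 0 t = 0 ∧ ψx 1 t = 0)

include hψ hψx hψt hbc hT hv in
lemma ftc_pointwise (y : I01) :
    ∫ t in (0:ℝ)..T, (ψx (F.Φ t y : ℝ) t * F.v (F.Φ t y) + ψt (F.Φ t y : ℝ) t)
      = ψ (F.Φ T y : ℝ) T - ψ (y : ℝ) 0 := by
  set S : Set (ℝ × ℝ) := Set.Icc (0:ℝ) 1 ×ˢ Set.Icc (0:ℝ) T with hS
  have hψcont : ContinuousOn (fun p : ℝ × ℝ => ψ p.1 p.2) S :=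
    fun p hp => (hψ p.1 hp.1 p.2 hp.2).continuousWithinAt
  have hcurve : Continuous (fun t => ((F.Φ t y : ℝ), t)) :=
    (continuous_subtype_val.comp (F.cont_t y)).prodMk continuous_id
  have hmaps : MapsTo (fun t => ((F.Φ t y : ℝ), t)) (Set.Icc 0 T) S := by
    intro t ht; exact ⟨(F.Φ t y).2, ht⟩
  have hg : ContinuousOn (fun t => ψ (F.Φ t y : ℝ) t) (Set.Icc 0 T) :=
    hψcont.comp (hcurve.continuousOn) hmaps
  have hderiv : ∀ t ∈ Set.Ioo (0:ℝ) T,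
      HasDerivWithinAt (fun t => ψ (F.Φ t y : ℝ) t)
        (ψx (F.Φ t y : ℝ) t * F.v (F.Φ t y) + ψt (F.Φ t y : ℝ) t) (Set.Ioi t) t := by
    intro t ht
    have htmem : t ∈ Set.Icc (0:ℝ) T := ⟨ht.1.le, ht.2.le⟩
    have hIocsub : Set.Ioc t T ∈ 𝓝[>] t := Ioc_mem_nhdsGT_of_mem ⟨le_refl t, ht.2⟩
    rcases lt_or_ge (ENNReal.ofReal t) (F.τ y) with h1 | h2
    · have hD : HasDerivAt (fun s => (F.Φ s y : ℝ)) (F.v (F.Φ t y)) t := F.ode y t ht.1.le h1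
      have hcD : HasDerivWithinAt (fun s => ((F.Φ s y : ℝ), s)) ((F.v (F.Φ t y), 1))
          (Set.Ioc t T) t := (hD.prodMk (hasDerivAt_id t)).hasDerivWithinAt
      have hM : MapsTo (fun s => ((F.Φ s y : ℝ), s)) (Set.Ioc t T) S :=
        fun s hs => ⟨(F.Φ s y).2, ⟨ht.1.le.trans hs.1.le, hs.2⟩⟩
      have := (hψ (F.Φ t y : ℝ) (F.Φ t y).2 t htmem).comp_hasDerivWithinAt_of_eq t hcD hM rfl
      have h2 : HasDerivWithinAt (fun s => ψ (F.Φ s y : ℝ) s)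
          (ψx (F.Φ t y : ℝ) t * F.v (F.Φ t y) + ψt (F.Φ t y : ℝ) t) (Set.Ioc t T) t := by
        refine this.congr_deriv ?_
        simp [ContinuousLinearMap.add_apply, ContinuousLinearMap.smul_apply]
      exact h2.mono_of_mem_nhdsWithin hIocsub
    · obtain hb := F.stopped y t h2
      have hfroz : ∀ s ∈ Set.Ioc t T, F.Φ s y = F.Φ t y := fun s hs => F.frozen y t s h2 hs.1.le
      have hψx0 : ψx (F.Φ t y : ℝ) t = 0 := by
        rcases hb with h | h <;> rw [h]
        · exact (hbc t htmem).1
        · exact (hbc t htmem).2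
      have hcD : HasDerivWithinAt (fun s : ℝ => ((F.Φ t y : ℝ), s)) (((0:ℝ), (1:ℝ)))
          (Set.Ioc t T) t :=
        ((hasDerivAt_const t ((F.Φ t y : ℝ))).prodMk (hasDerivAt_id t)).hasDerivWithinAt
      have hM : MapsTo (fun s : ℝ => ((F.Φ t y : ℝ), s)) (Set.Ioc t T) S :=
        fun s hs => ⟨(F.Φ t y).2, ⟨ht.1.le.trans hs.1.le, hs.2⟩⟩
      have hcomp := (hψ (F.Φ t y : ℝ) (F.Φ t y).2 t htmem).comp_hasDerivWithinAt_of_eq t hcD hM rfl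
      have h3 : HasDerivWithinAt (fun s => ψ (F.Φ t y : ℝ) s)
          (ψx (F.Φ t y : ℝ) t * F.v (F.Φ t y) + ψt (F.Φ t y : ℝ) t) (Set.Ioc t T) t := by
        refine hcomp.congr_deriv ?_
        simp [ContinuousLinearMap.add_apply, ContinuousLinearMap.smul_apply, hψx0]
      have h4 : HasDerivWithinAt (fun s => ψ (F.Φ s y : ℝ) s)
          (ψx (F.Φ t y : ℝ) t * F.v (F.Φ t y) + ψt (F.Φ t y : ℝ) t) (Set.Ioc t T) t := by
        refine h3.congr (fun s hs => ?_) rfl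
        rw [hfroz s hs]
      exact h4.mono_of_mem_nhdsWithin hIocsub
  have hint : IntervalIntegrable
      (fun t => ψx (F.Φ t y : ℝ) t * F.v (F.Φ t y) + ψt (F.Φ t y : ℝ) t) volume 0 T := by
    apply ContinuousOn.intervalIntegrable
    rw [Set.uIcc_of_le hT.le]
    exact ((hψx.comp hcurve.continuousOn hmaps).mul
      ((hv.continuous.comp (F.cont_t y)).continuousOn)).add (hψt.comp hcurve.continuousOn hmaps)
  have := intervalIntegral.integral_eq_sub_of_hasDeriv_right_of_le hT.le hg hderiv hint
  rw [this, F.init y]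

/-- clamp to `[0,T]` -/
def clampT (T t : ℝ) : ℝ := max (min t T) 0

lemma clampT_mem (T : ℝ) (hT : 0 < T) (t : ℝ) : clampT T t ∈ Set.Icc (0:ℝ) T := by
  unfold clampT
  constructor
  · exact le_max_right _ _
  · exact max_le (min_le_right _ _) hT.le

lemma clampT_eq (T : ℝ) {t : ℝ} (ht : t ∈ Set.Ioc (0:ℝ) T) : clampT T t = t := by
  unfold clampT
  rw [min_eq_left ht.2, max_eq_left ht.1.le]

lemma clampT_cont (T : ℝ) : Continuous (clampT T) :=
  (continuous_id.min continuous_const).max continuous_const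

include hv hT hψx hψt in
lemma fubini_step (μ : Measure I01) [IsFiniteMeasure μ] :
    ∫ t in Set.Ioc (0:ℝ) T, (∫ y, (ψx (F.Φ t y : ℝ) t * F.v (F.Φ t y) + ψt (F.Φ t y : ℝ) t) ∂μ)
      = ∫ y, (∫ t in Set.Ioc (0:ℝ) T,
          (ψx (F.Φ t y : ℝ) t * F.v (F.Φ t y) + ψt (F.Φ t y : ℝ) t)) ∂μ := by
  set S : Set (ℝ × ℝ) := Set.Icc (0:ℝ) 1 ×ˢ Set.Icc (0:ℝ) T with hS
  -- clamped kernel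
  set G : ℝ × I01 → I01 := fun p => F.Φ (clampT T p.1) p.2 with hG
  have hGmeas : Measurable G := by
    have : Measurable (Function.uncurry (fun t (y : I01) => F.Φ (clampT T t) y)) :=
      measurable_uncurry_of_continuous_of_measurable
        (fun y => (F.cont_t y).comp (clampT_cont T))
        (fun t => (F.cont_y (clampT T t) (clampT_mem T hT t).1).measurable)
    exact this
  set f : ℝ × I01 → ℝ := fun p =>
    ψx (G p : ℝ) (clampT T p.1) * F.v (G p) + ψt (G p : ℝ) (clampT T p.1) with hf
  have hSm : ∀ p : ℝ × I01, ((G p : ℝ), clampT T p.1) ∈ S := fun p =>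
    ⟨(G p).2, clampT_mem T hT p.1⟩
  have hm0 : Measurable (fun p : ℝ × I01 => (⟨((G p : ℝ), clampT T p.1), hSm p⟩ : S)) := by
    apply Measurable.subtype_mk
    exact (measurable_subtype_coe.comp hGmeas).prodMk
      ((clampT_cont T).measurable.comp measurable_fst)
  have hfmeas : Measurable f := by
    have h1 : Measurable (fun p : ℝ × I01 => ψx (G p : ℝ) (clampT T p.1)) :=
      (continuousOn_iff_continuous_restrict.mp hψx).measurable.comp hm0
    have h2 : Measurable (fun p : ℝ × I01 => ψt (G p : ℝ) (clampT T p.1)) :=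
      (continuousOn_iff_continuous_restrict.mp hψt).measurable.comp hm0
    have h3 : Measurable (fun p : ℝ × I01 => F.v (G p)) :=
      hv.continuous.measurable.comp hGmeas
    exact (h1.mul h3).add h2
  -- bounds
  have hScpt : IsCompact S := (isCompact_Icc).prod isCompact_Icc
  obtain ⟨Cx, hCx⟩ := hScpt.exists_bound_of_continuousOn hψx
  obtain ⟨Ct, hCt⟩ := hScpt.exists_bound_of_continuousOn hψt
  obtain ⟨Cv, hCv⟩ := (isCompact_univ (X := I01)).exists_bound_of_continuousOn
    hv.continuous.continuousOn
  have hbound : ∀ p : ℝ × I01, ‖f p‖ ≤ |Cx| * |Cv| + |Ct| := by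
    intro p
    have h1 : ‖ψx (G p : ℝ) (clampT T p.1)‖ ≤ |Cx| :=
      le_trans (hCx _ (hSm p)) (le_abs_self _)
    have h2 : ‖ψt (G p : ℝ) (clampT T p.1)‖ ≤ |Ct| :=
      le_trans (hCt _ (hSm p)) (le_abs_self _)
    have h3 : ‖F.v (G p)‖ ≤ |Cv| := le_trans (hCv _ (mem_univ _)) (le_abs_self _)
    calc ‖f p‖ ≤ ‖ψx (G p : ℝ) (clampT T p.1) * F.v (G p)‖ + ‖ψt (G p : ℝ) (clampT T p.1)‖ :=
          norm_add_le _ _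
      _ ≤ |Cx| * |Cv| + |Ct| := by
          refine add_le_add ?_ h2
          rw [norm_mul]
          exact mul_le_mul h1 h3 (norm_nonneg _) (abs_nonneg _)
  have : IsFiniteMeasure (volume.restrict (Set.Ioc (0:ℝ) T)) :=
    ⟨by rw [Measure.restrict_apply_univ]; exact measure_Ioc_lt_top⟩
  have hfint : Integrable f (((volume.restrict (Set.Ioc (0:ℝ) T))).prod μ) :=
    (integrable_const (|Cx| * |Cv| + |Ct|)).mono' hfmeas.aestronglyMeasurable
      (ae_of_all _ hbound)
  have hswap := MeasureTheory.integral_integral_swap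
    (f := fun t y => f (t, y)) (μ := volume.restrict (Set.Ioc (0:ℝ) T)) (ν := μ) hfint
  -- replace clamped by unclamped on both sides
  have hL : ∫ t in Set.Ioc (0:ℝ) T,
      (∫ y, (ψx (F.Φ t y : ℝ) t * F.v (F.Φ t y) + ψt (F.Φ t y : ℝ) t) ∂μ)
      = ∫ t in Set.Ioc (0:ℝ) T, (∫ y, f (t, y) ∂μ) := by
    apply setIntegral_congr_fun measurableSet_Ioc
    intro t ht
    simp only [hf, hG, clampT_eq T ht]
  have hR : ∀ y : I01, (∫ t in Set.Ioc (0:ℝ) T, f (t, y))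
      = ∫ t in Set.Ioc (0:ℝ) T,
        (ψx (F.Φ t y : ℝ) t * F.v (F.Φ t y) + ψt (F.Φ t y : ℝ) t) := by
    intro y
    apply setIntegral_congr_fun measurableSet_Ioc
    intro t ht
    simp only [hf, hG, clampT_eq T ht]
  rw [hL, hswap]
  exact integral_congr_ae (ae_of_all _ fun y => hR y)

include hv hT hψx hψt in
lemma marginal_integrable (μ : Measure I01) [IsFiniteMeasure μ] :
    IntegrableOn (fun t => ∫ y, (ψx (F.Φ t y : ℝ) t * F.v (F.Φ t y) + ψt (F.Φ t y : ℝ) t) ∂μ)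
      (Set.Ioc (0:ℝ) T) volume := by
  set S : Set (ℝ × ℝ) := Set.Icc (0:ℝ) 1 ×ˢ Set.Icc (0:ℝ) T with hS
  set G : ℝ × I01 → I01 := fun p => F.Φ (clampT T p.1) p.2 with hG
  have hGmeas : Measurable G := by
    have : Measurable (Function.uncurry (fun t (y : I01) => F.Φ (clampT T t) y)) :=
      measurable_uncurry_of_continuous_of_measurable
        (fun y => (F.cont_t y).comp (clampT_cont T))
        (fun t => (F.cont_y (clampT T t) (clampT_mem T hT t).1).measurable)
    exact this
  set f : ℝ × I01 → ℝ := fun p =>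
    ψx (G p : ℝ) (clampT T p.1) * F.v (G p) + ψt (G p : ℝ) (clampT T p.1) with hf
  have hSm : ∀ p : ℝ × I01, ((G p : ℝ), clampT T p.1) ∈ S := fun p =>
    ⟨(G p).2, clampT_mem T hT p.1⟩
  have hm0 : Measurable (fun p : ℝ × I01 => (⟨((G p : ℝ), clampT T p.1), hSm p⟩ : S)) := by
    apply Measurable.subtype_mk
    exact (measurable_subtype_coe.comp hGmeas).prodMk
      ((clampT_cont T).measurable.comp measurable_fst)
  have hfmeas : Measurable f := by
    have h1 : Measurable (fun p : ℝ × I01 => ψx (G p : ℝ) (clampT T p.1)) :=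
      (continuousOn_iff_continuous_restrict.mp hψx).measurable.comp hm0
    have h2 : Measurable (fun p : ℝ × I01 => ψt (G p : ℝ) (clampT T p.1)) :=
      (continuousOn_iff_continuous_restrict.mp hψt).measurable.comp hm0
    have h3 : Measurable (fun p : ℝ × I01 => F.v (G p)) :=
      hv.continuous.measurable.comp hGmeas
    exact (h1.mul h3).add h2
  have hScpt : IsCompact S := (isCompact_Icc).prod isCompact_Icc
  obtain ⟨Cx, hCx⟩ := hScpt.exists_bound_of_continuousOn hψx
  obtain ⟨Ct, hCt⟩ := hScpt.exists_bound_of_continuousOn hψt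
  obtain ⟨Cv, hCv⟩ := (isCompact_univ (X := I01)).exists_bound_of_continuousOn
    hv.continuous.continuousOn
  have hbound : ∀ p : ℝ × I01, ‖f p‖ ≤ |Cx| * |Cv| + |Ct| := by
    intro p
    have h1 : ‖ψx (G p : ℝ) (clampT T p.1)‖ ≤ |Cx| :=
      le_trans (hCx _ (hSm p)) (le_abs_self _)
    have h2 : ‖ψt (G p : ℝ) (clampT T p.1)‖ ≤ |Ct| :=
      le_trans (hCt _ (hSm p)) (le_abs_self _)
    have h3 : ‖F.v (G p)‖ ≤ |Cv| := le_trans (hCv _ (mem_univ _)) (le_abs_self _)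
    calc ‖f p‖ ≤ ‖ψx (G p : ℝ) (clampT T p.1) * F.v (G p)‖ + ‖ψt (G p : ℝ) (clampT T p.1)‖ :=
          norm_add_le _ _
      _ ≤ |Cx| * |Cv| + |Ct| := by
          refine add_le_add ?_ h2
          rw [norm_mul]
          exact mul_le_mul h1 h3 (norm_nonneg _) (abs_nonneg _)
  have : IsFiniteMeasure (volume.restrict (Set.Ioc (0:ℝ) T)) :=
    ⟨by rw [Measure.restrict_apply_univ]; exact measure_Ioc_lt_top⟩
  have hfint : Integrable f (((volume.restrict (Set.Ioc (0:ℝ) T))).prod μ) :=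
    (integrable_const (|Cx| * |Cv| + |Ct|)).mono' hfmeas.aestronglyMeasurable
      (ae_of_all _ hbound)
  have hmar : Integrable (fun t => ∫ y, f (t, y) ∂μ) (volume.restrict (Set.Ioc (0:ℝ) T)) :=
    hfint.integral_prod_left
  apply hmar.congr
  filter_upwards [ae_restrict_mem measurableSet_Ioc] with t ht
  simp only [hf, hG, clampT_eq T ht]

end Main

/-- For the push-forward semigroup `P_t ν₀ = Φ_t # ν₀` of the stopped flow and any
`C¹` test function with no-flux boundary conditions:
`∫_0^T ⟨P_t ν₀, ∂_x ψ·v + ∂_t ψ⟩ dt = ⟨P_T ν₀, ψ(·,T)⟩ − ⟨ν₀, ψ(·,0)⟩`. -/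
theorem pushforward_weak_identity (F : StoppedFlow) (K : ℝ≥0) (hv : LipschitzWith K F.v)
    (ν₀ : SignedMeasure I01) (T : ℝ) (hT : 0 < T) (ψ ψx ψt : ℝ → ℝ → ℝ)
    (hψ : ∀ x ∈ Set.Icc (0:ℝ) 1, ∀ t ∈ Set.Icc (0:ℝ) T,
      HasFDerivWithinAt (fun p : ℝ × ℝ => ψ p.1 p.2)
        ((ψx x t) • (ContinuousLinearMap.fst ℝ ℝ ℝ) +
          (ψt x t) • (ContinuousLinearMap.snd ℝ ℝ ℝ))
        (Set.Icc (0:ℝ) 1 ×ˢ Set.Icc (0:ℝ) T) (x, t))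
    (hψx : ContinuousOn (fun p : ℝ × ℝ => ψx p.1 p.2) (Set.Icc (0:ℝ) 1 ×ˢ Set.Icc (0:ℝ) T))
    (hψt : ContinuousOn (fun p : ℝ × ℝ => ψt p.1 p.2) (Set.Icc (0:ℝ) 1 ×ˢ Set.Icc (0:ℝ) T))
    (hbc : ∀ t ∈ Set.Icc (0:ℝ) T, ψx 0 t = 0 ∧ ψx 1 t = 0)
    :
    ∫ t in (0:ℝ)..T,
        pairSM (ν₀.map (F.Φ t)) (fun x => ψx (x : ℝ) t * F.v x + ψt (x : ℝ) t)
      = pairSM (ν₀.map (F.Φ T)) (fun x => ψ (x : ℝ) T) - pairSM ν₀ (fun x => ψ (x : ℝ) 0) := by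
  set μp := ν₀.toJordanDecomposition.posPart with hμp
  set μn := ν₀.toJordanDecomposition.negPart with hμn
  set S : Set (ℝ × ℝ) := Set.Icc (0:ℝ) 1 ×ˢ Set.Icc (0:ℝ) T with hS
  have hψcont : ContinuousOn (fun p : ℝ × ℝ => ψ p.1 p.2) S :=
    fun p hp => (hψ p.1 hp.1 p.2 hp.2).continuousWithinAt
  -- continuity of slices
  have hφcont : ∀ t ∈ Set.Icc (0:ℝ) T,
      Continuous (fun x : I01 => ψx (x : ℝ) t * F.v x + ψt (x : ℝ) t) := by
    intro t ht
    have hmap : MapsTo (fun x : I01 => ((x : ℝ), t)) univ S := fun x _ => ⟨x.2, ht⟩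
    have hc : Continuous (fun x : I01 => ((x : ℝ), t)) :=
      continuous_subtype_val.prodMk continuous_const
    have c1 : Continuous (fun x : I01 => ψx (x : ℝ) t) := by
      rw [← continuousOn_univ]
      exact hψx.comp hc.continuousOn hmap
    have c2 : Continuous (fun x : I01 => ψt (x : ℝ) t) := by
      rw [← continuousOn_univ]
      exact hψt.comp hc.continuousOn hmap
    exact (c1.mul hv.continuous).add c2
  have hψTc : Continuous (fun x : I01 => ψ (x : ℝ) T) := by
    rw [← continuousOn_univ]
    exact hψcont.comp ((continuous_subtype_val.prodMk continuous_const).continuousOn)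
      (fun x _ => ⟨x.2, right_mem_Icc.mpr hT.le⟩)
  have hψ0c : Continuous (fun x : I01 => ψ (x : ℝ) 0) := by
    rw [← continuousOn_univ]
    exact hψcont.comp ((continuous_subtype_val.prodMk continuous_const).continuousOn)
      (fun x _ => ⟨x.2, left_mem_Icc.mpr hT.le⟩)
  have haT : Continuous (fun y : I01 => ψ (F.Φ T y : ℝ) T) :=
    hψTc.comp (F.cont_y T hT.le)
  -- Step 1: rewrite the integrand
  have step1 : ∀ t ∈ Set.Icc (0:ℝ) T,
      pairSM (ν₀.map (F.Φ t)) (fun x => ψx (x : ℝ) t * F.v x + ψt (x : ℝ) t)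
      = (∫ y, (ψx (F.Φ t y : ℝ) t * F.v (F.Φ t y) + ψt (F.Φ t y : ℝ) t) ∂μp)
        - ∫ y, (ψx (F.Φ t y : ℝ) t * F.v (F.Φ t y) + ψt (F.Φ t y : ℝ) t) ∂μn := by
    intro t ht
    have hmeas : Measurable (F.Φ t) := (F.cont_y t ht.1).measurable
    rw [pairSM_eq (μp.map (F.Φ t)) (μn.map (F.Φ t)) _ (map_decomp ν₀ _ hmeas) _ (hφcont t ht),
      integral_map hmeas.aemeasurable ((hφcont t ht).aestronglyMeasurable),
      integral_map hmeas.aemeasurable ((hφcont t ht).aestronglyMeasurable)]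
  rw [intervalIntegral.integral_congr (g := fun t =>
      (∫ y, (ψx (F.Φ t y : ℝ) t * F.v (F.Φ t y) + ψt (F.Φ t y : ℝ) t) ∂μp)
        - ∫ y, (ψx (F.Φ t y : ℝ) t * F.v (F.Φ t y) + ψt (F.Φ t y : ℝ) t) ∂μn)
      (by rw [Set.uIcc_of_le hT.le]; exact step1)]
  rw [intervalIntegral.integral_of_le hT.le]
  rw [integral_sub (marginal_integrable F hv T hT ψx ψt hψx hψt μp)
    (marginal_integrable F hv T hT ψx ψt hψx hψt μn)]
  rw [fubini_step F hv T hT ψx ψt hψx hψt μp, fubini_step F hv T hT ψx ψt hψx hψt μn]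
  -- inner FTC
  have hinner : ∀ (μ : Measure I01) [IsFiniteMeasure μ],
      ∫ y, (∫ t in Set.Ioc (0:ℝ) T,
          (ψx (F.Φ t y : ℝ) t * F.v (F.Φ t y) + ψt (F.Φ t y : ℝ) t)) ∂μ
      = (∫ y, ψ (F.Φ T y : ℝ) T ∂μ) - ∫ y, ψ ((y : I01) : ℝ) 0 ∂μ := by
    intro μ hμ
    have : ∀ y : I01, (∫ t in Set.Ioc (0:ℝ) T,
        (ψx (F.Φ t y : ℝ) t * F.v (F.Φ t y) + ψt (F.Φ t y : ℝ) t))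
        = ψ (F.Φ T y : ℝ) T - ψ ((y : I01) : ℝ) 0 := by
      intro y
      rw [← intervalIntegral.integral_of_le hT.le]
      exact ftc_pointwise F hv T hT ψ ψx ψt hψ hψx hψt hbc y
    rw [integral_congr_ae (ae_of_all _ this)]
    exact integral_sub (cont_integrable μ _ haT) (cont_integrable μ _ hψ0c)
  rw [hinner μp, hinner μn]
  -- RHS identification
  have hmeasT : Measurable (F.Φ T) := (F.cont_y T hT.le).measurable
  have hRT : pairSM (ν₀.map (F.Φ T)) (fun x => ψ (x : ℝ) T)
      = (∫ y, ψ (F.Φ T y : ℝ) T ∂μp) - ∫ y, ψ (F.Φ T y : ℝ) T ∂μn := by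
    rw [pairSM_eq (μp.map (F.Φ T)) (μn.map (F.Φ T)) _ (map_decomp ν₀ _ hmeasT) _ hψTc,
      integral_map hmeasT.aemeasurable hψTc.aestronglyMeasurable,
      integral_map hmeasT.aemeasurable hψTc.aestronglyMeasurable]
  have hR0 : pairSM ν₀ (fun x => ψ (x : ℝ) 0)
      = (∫ y, ψ ((y : I01) : ℝ) 0 ∂μp) - ∫ y, ψ ((y : I01) : ℝ) 0 ∂μn := rfl
  rw [hRT, hR0]
  ring

end
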